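/- arXiv:2102.03693 — 3 statements merged into one kernel-verified Lean document; each statement's English description precedes it below -/
import Mathlib

section
/- Let K be a field of characteristic zero, σ the K-automorphism of K(t) with σ(t) = t+1, and f = a/b ∈ K(t) with gcd(a,b) = 1. If p is an irreducible factor of b, then the local dispersion at p of σ(f) − f equals dis_p(f) + 1. -/
open Polynomial
open scoped Classical

/-- The shift `σ^i` on `K[t]`, sending `q(t)` to `q(t + i)`. -/
noncomputable def shiftPoly {K : Type*} [Field K] (i : ℤ) (q : K[X]) : K[X] :=
  q.comp (X + C (i : K))

/-- The local dispersion of `u ∈ K[t]` at an irreducible `p`: the supremum of `|i - j|` over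
integers `i, j` with `σ^i(p) ∣ u` and `σ^j(p) ∣ u` (`0` when no shift of `p` divides `u`),
with `dis_p(0) = ⊤`. -/
noncomputable def locDisp {K : Type*} [Field K] (p u : K[X]) : ℕ∞ :=
  if u = 0 then ⊤
  else sSup {d : ℕ∞ | ∃ i j : ℤ, shiftPoly i p ∣ u ∧ shiftPoly j p ∣ u ∧
    d = ((i - j).natAbs : ℕ∞)}

section aux
variable {K : Type*} [Field K]

lemma shiftPoly_zero (u : K[X]) : shiftPoly 0 u = u := by
  simp [shiftPoly]

lemma shiftPoly_shiftPoly (i j : ℤ) (u : K[X]) :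
    shiftPoly i (shiftPoly j u) = shiftPoly (i + j) u := by
  unfold shiftPoly
  rw [comp_assoc]
  congr 1
  simp [add_comp]
  ring

noncomputable def shiftEquiv (K : Type*) [Field K] (i : ℤ) : K[X] ≃+* K[X] where
  toFun := shiftPoly i
  invFun := shiftPoly (-i)
  left_inv u := by rw [shiftPoly_shiftPoly]; simp [shiftPoly_zero]
  right_inv u := by rw [shiftPoly_shiftPoly]; simp [shiftPoly_zero]
  map_mul' u v := mul_comp u v _
  map_add' u v := add_comp

lemma shiftPoly_ne_zero {u : K[X]} (hu : u ≠ 0) (i : ℤ) : shiftPoly i u ≠ 0 := by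
  intro h
  exact hu ((shiftEquiv K i).injective (h.trans (map_zero (shiftEquiv K i)).symm))

lemma shiftPoly_irreducible {p : K[X]} (hp : Irreducible p) (i : ℤ) :
    Irreducible (shiftPoly i p) :=
  hp.map (shiftEquiv K i)

lemma shiftPoly_prime {p : K[X]} (hp : Irreducible p) (i : ℤ) :
    Prime (shiftPoly i p) :=
  (shiftPoly_irreducible hp i).prime

lemma shiftPoly_dvd {u v : K[X]} (h : u ∣ v) (i : ℤ) : shiftPoly i u ∣ shiftPoly i v := by
  obtain ⟨c, rfl⟩ := h
  exact ⟨shiftPoly i c, mul_comp u c _⟩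

lemma shiftPoly_dvd_iff {u v : K[X]} (i : ℤ) : shiftPoly i u ∣ v ↔ u ∣ shiftPoly (-i) v := by
  constructor
  · intro h
    have := shiftPoly_dvd h (-i)
    rwa [shiftPoly_shiftPoly, neg_add_cancel, shiftPoly_zero] at this
  · intro h
    have := shiftPoly_dvd h i
    rwa [shiftPoly_shiftPoly, add_neg_cancel, shiftPoly_zero] at this

/-- Finiteness of the set of shifts of an irreducible `p` dividing a nonzero `b`. -/
lemma finite_shift_divisors [CharZero K] {p b : K[X]} (hp : Irreducible p) (hb : b ≠ 0) :
    {i : ℤ | shiftPoly i p ∣ b}.Finite := by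
  set L := AlgebraicClosure K
  let φ : K →+* L := algebraMap K L
  have hpdeg : p.degree ≠ 0 := (degree_pos_of_irreducible hp).ne'
  have hpm : (p.map φ).degree ≠ 0 := by
    rwa [degree_map]
  obtain ⟨α, hα⟩ := IsAlgClosed.exists_root (p.map φ) hpm
  have hbm : b.map φ ≠ 0 := (Polynomial.map_ne_zero_iff φ.injective).mpr hb
  have key : ∀ i : ℤ, shiftPoly i p ∣ b → (α - (i : L)) ∈ (b.map φ).roots.toFinset := by
    intro i hi
    have h2 : (shiftPoly i p).map φ ∣ b.map φ := Polynomial.map_dvd φ hi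
    have h3 : (shiftPoly i p).map φ = (p.map φ).comp (X + C (i : L)) := by
      rw [shiftPoly, Polynomial.map_comp]
      congr 1
      simp [φ]
      exact (map_intCast (C : L →+* L[X]) i).symm
    have h4 : ((shiftPoly i p).map φ).IsRoot (α - (i : L)) := by
      rw [h3, IsRoot, eval_comp]
      simpa using hα
    simp only [Multiset.mem_toFinset, mem_roots hbm]
    exact h4.dvd h2
  apply Set.Finite.subset (Set.Finite.preimage ?_ ((b.map φ).roots.toFinset : Set L).toFinite)
    (fun i hi => key i hi)
  intro i _ j _ hij
  have : (i : L) = j := by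
    have := sub_right_injective hij
    exact_mod_cast this
  exact_mod_cast this

lemma locDisp_eq {p u : K[X]} (hu : u ≠ 0) {m M : ℤ}
    (hm : shiftPoly m p ∣ u) (hM : shiftPoly M p ∣ u)
    (hbound : ∀ i : ℤ, shiftPoly i p ∣ u → m ≤ i ∧ i ≤ M) :
    locDisp p u = ((M - m).natAbs : ℕ∞) := by
  rw [locDisp, if_neg hu]
  apply le_antisymm
  · apply sSup_le
    rintro d ⟨i, j, hi, hj, rfl⟩
    obtain ⟨h1, h2⟩ := hbound i hi
    obtain ⟨h3, h4⟩ := hbound j hj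
    exact_mod_cast (by omega : (i - j).natAbs ≤ (M - m).natAbs)
  · exact le_sSup ⟨M, m, hM, hm, rfl⟩

end aux

/-- Let `f = a/b ∈ K(t)` with `gcd(a,b) = 1`. If `p` is an irreducible factor of `b`, then the
local dispersion at `p` of `Δ_t(f) = σ_t(f) - f` equals `dis_p(f) + 1`, where `dis_p` of a
rational function is the local dispersion of its reduced denominator. -/
theorem locDisp_diff {K : Type*} [Field K] [CharZero K]
    (a b p : K[X]) (hb : b ≠ 0) (hab : IsCoprime a b)
    (hp : Irreducible p) (hpb : p ∣ b)
    (f Δf : RatFunc K)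
    (hf : f = algebraMap K[X] (RatFunc K) a / algebraMap K[X] (RatFunc K) b)
    (hΔf : Δf = algebraMap K[X] (RatFunc K) (shiftPoly 1 a) /
        algebraMap K[X] (RatFunc K) (shiftPoly 1 b) -
      algebraMap K[X] (RatFunc K) a / algebraMap K[X] (RatFunc K) b) :
    locDisp p Δf.denom = locDisp p b + 1 := by
  classical
  set σa := shiftPoly 1 a with hσa
  set σb := shiftPoly 1 b with hσb
  have hσb0 : σb ≠ 0 := shiftPoly_ne_zero hb 1
  set N : K[X] := σa * b - a * σb with hN
  set M0 : K[X] := σb * b with hM0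
  have hM00 : M0 ≠ 0 := mul_ne_zero hσb0 hb
  set φ := algebraMap K[X] (RatFunc K) with hφ
  have hφb : φ b ≠ 0 := RatFunc.algebraMap_ne_zero hb
  have hφσb : φ σb ≠ 0 := RatFunc.algebraMap_ne_zero hσb0
  have hφM0 : φ M0 ≠ 0 := RatFunc.algebraMap_ne_zero hM00
  -- Δf = N / M0
  have hΔ2 : Δf = φ N / φ M0 := by
    rw [hΔf, div_sub_div _ _ hφσb hφb, hN, hM0, map_sub, map_mul, map_mul, map_mul]
    ring_nf
  -- the key cross-multiplication identity
  have hkey : N * Δf.denom = Δf.num * M0 := by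
    have h2 : φ Δf.num / φ Δf.denom = φ N / φ M0 := by
      rw [RatFunc.num_div_denom, hΔ2]
    rw [div_eq_div_iff (RatFunc.algebraMap_ne_zero Δf.denom_ne_zero) hφM0] at h2
    apply RatFunc.algebraMap_injective K
    rw [map_mul, map_mul]
    exact h2.symm
  have hcop : IsCoprime Δf.num Δf.denom := Δf.isCoprime_num_denom
  -- divisibility transfer lemmas
  have hintoM0 : ∀ q : K[X], Prime q → q ∣ Δf.denom → q ∣ M0 := by
    intro q hq hqd
    have h1 : q ∣ Δf.num * M0 := hkey ▸ hqd.mul_left N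
    rcases hq.dvd_or_dvd h1 with h | h
    · exact absurd (hcop.isUnit_of_dvd' h hqd) hq.not_unit
    · exact h
  have hintoB : ∀ q : K[X], Prime q → q ∣ M0 → ¬ q ∣ N → q ∣ Δf.denom := by
    intro q hq hqM0 hqN
    have h1 : q ∣ N * Δf.denom := hkey ▸ (hqM0.mul_left Δf.num)
    rcases hq.dvd_or_dvd h1 with h | h
    · exact absurd h hqN
    · exact h
  -- the set of shifts dividing b
  set S : Set ℤ := {i : ℤ | shiftPoly i p ∣ b} with hS
  have hSfin : S.Finite := finite_shift_divisors hp hb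
  have hS0 : (0 : ℤ) ∈ S := by simpa [hS, shiftPoly_zero] using hpb
  set F := hSfin.toFinset with hF
  have hFne : F.Nonempty := ⟨0, by simp [hF, hSfin.mem_toFinset, hS0]⟩
  set m := F.min' hFne with hm
  set M := F.max' hFne with hMdef
  have hmS : shiftPoly m p ∣ b := hSfin.mem_toFinset.mp (F.min'_mem hFne)
  have hMS : shiftPoly M p ∣ b := hSfin.mem_toFinset.mp (F.max'_mem hFne)
  have hmle : ∀ i : ℤ, shiftPoly i p ∣ b → m ≤ i ∧ i ≤ M := by
    intro i hi
    have hiF : i ∈ F := hSfin.mem_toFinset.mpr hi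
    exact ⟨F.min'_le i hiF, F.le_max' i hiF⟩
  have hmM : m ≤ M := (hmle M hMS).1
  -- q1 = shift m p divides denom
  have hcopσ : IsCoprime σa σb := by
    have h := hab.map (shiftEquiv K 1).toRingHom
    exact h
  have hq1 : shiftPoly m p ∣ Δf.denom := by
    apply hintoB _ (shiftPoly_prime hp m) (Dvd.dvd.mul_left hmS σb)
    intro hdvd
    have hpm : Prime (shiftPoly m p) := shiftPoly_prime hp m
    have hnb : ¬ shiftPoly m p ∣ σb := by
      intro h
      have h2 := shiftPoly_dvd h (-1)
      rw [hσb, shiftPoly_shiftPoly, shiftPoly_shiftPoly, neg_add_cancel, shiftPoly_zero] at h2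
      have := (hmle _ h2).1
      omega
    have hna : ¬ shiftPoly m p ∣ a := by
      intro h
      exact hpm.not_unit (hab.isUnit_of_dvd' h hmS)
    have h1 : shiftPoly m p ∣ a * σb := by
      have h2 : shiftPoly m p ∣ σa * b := hmS.mul_left σa
      have := dvd_sub h2 hdvd
      simpa [hN] using this
    rcases hpm.dvd_or_dvd h1 with h | h
    · exact hna h
    · exact hnb h
  -- q2 = shift (M+1) p divides denom
  have hq2 : shiftPoly (M + 1) p ∣ Δf.denom := by
    have hpm : Prime (shiftPoly (M + 1) p) := shiftPoly_prime hp (M + 1)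
    have hdσb : shiftPoly (M + 1) p ∣ σb := by
      have := shiftPoly_dvd hMS 1
      rwa [shiftPoly_shiftPoly, add_comm] at this
    apply hintoB _ hpm (hdσb.mul_right b)
    intro hdvd
    have hnb : ¬ shiftPoly (M + 1) p ∣ b := by
      intro h
      have := (hmle _ h).2
      omega
    have hnσa : ¬ shiftPoly (M + 1) p ∣ σa := by
      intro h
      exact hpm.not_unit (hcopσ.isUnit_of_dvd' h hdσb)
    have h1 : shiftPoly (M + 1) p ∣ σa * b := by
      have h2 : shiftPoly (M + 1) p ∣ a * σb := hdσb.mul_left a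
      have := dvd_add hdvd h2
      simpa [hN] using this
    rcases hpm.dvd_or_dvd h1 with h | h
    · exact hnσa h
    · exact hnb h
  -- bounds for shifts dividing denom
  have hbound : ∀ i : ℤ, shiftPoly i p ∣ Δf.denom → m ≤ i ∧ i ≤ M + 1 := by
    intro i hi
    have hiM0 : shiftPoly i p ∣ M0 := hintoM0 _ (shiftPoly_prime hp i) hi
    rcases (shiftPoly_prime hp i).dvd_or_dvd hiM0 with h | h
    · have h2 := shiftPoly_dvd h (-1)
      rw [hσb, shiftPoly_shiftPoly, shiftPoly_shiftPoly, neg_add_cancel, shiftPoly_zero] at h2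
      have := hmle _ h2
      omega
    · have := hmle _ h
      omega
  rw [locDisp_eq (Δf.denom_ne_zero) hq1 hq2 hbound, locDisp_eq hb hmS hMS hmle]
  have h1 : (M + 1 - m).natAbs = (M - m).natAbs + 1 := by omega
  rw [h1]
  push_cast
  ring
end

section
/- Let F be a field of characteristic zero, σ_t the F(x₁,…,x_m)-automorphism of F(t, x₁,…,x_m) with σ_t(t) = t+1, and f = a/b with a, b ∈ F[t, x₁, …, x_m], gcd(a,b) = 1. If there exists a nonzero operator L = Σ_{i=0}^ρ ℓ_i S_t^i with ℓ_i ∈ F(t), ℓ_ρ ≠ 0, such that Σ ℓ_i·σ_t^i(f) = 0, then b is split, i.e., b is a product of a polynomial in t and a polynomial in x₁,…,x_m. -/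
open Polynomial

/-- The natural embedding `F(t) → K(t)` induced by `F ⊆ K`. -/
noncomputable def liftRF {F K : Type*} [Field F] [Field K] [Algebra F K] :
    RatFunc F →+* RatFunc K :=
  RatFunc.mapRingHom (Polynomial.mapRingHom (algebraMap F K)) (by
    intro q hq
    simp only [Submonoid.mem_comap, Polynomial.coe_mapRingHom]
    exact mem_nonZeroDivisors_of_ne_zero
      ((Polynomial.map_ne_zero_iff (algebraMap F K).injective).mpr
        (nonZeroDivisors.ne_zero hq)))

/-- The shift `σ_t^i` on `R[t]`, sending `q(t)` to `q(t + i)` (coefficients in `R` are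
fixed, i.e. the `x`-variables are fixed). -/
noncomputable def shiftPolyN {R : Type*} [CommRing R] (i : ℕ) (q : Polynomial R) :
    Polynomial R :=
  q.comp (X + C (i : R))

/-- The embedding of `F[t, x₁, …, x_m] = (F[x])[t]` into `F(t, x₁, …, x_m) = K(t)`,
where `K = F(x₁, …, x_m)`. -/
noncomputable def polyToRF {F : Type*} [Field F] (m : ℕ)
    (u : Polynomial (MvPolynomial (Fin m) F)) :
    RatFunc (FractionRing (MvPolynomial (Fin m) F)) :=
  algebraMap (Polynomial (FractionRing (MvPolynomial (Fin m) F))) _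
    (u.map (algebraMap (MvPolynomial (Fin m) F) (FractionRing (MvPolynomial (Fin m) F))))

/-! ### Auxiliary material -/

namespace StSplit

open scoped nonZeroDivisors

variable {K : Type*} [Field K]

/-- The shift `q(t) ↦ q(t + c)` as an algebra homomorphism. -/
noncomputable def sh (c : K) : K[X] →ₐ[K] K[X] := aeval (X + C c)

lemma sh_apply (c : K) (p : K[X]) : sh c p = p.comp (X + C c) := by
  simp [sh, aeval_def, comp, eval₂_eq_eval_map]

lemma sh_sh (c d : K) (p : K[X]) : sh c (sh d p) = sh (d + c) p := by
  simp only [sh_apply, comp_assoc, add_comp, X_comp, C_comp, ← C_add, add_assoc]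
  rw [add_comm c d]

lemma sh_zero (p : K[X]) : sh (0 : K) p = p := by
  simp [sh_apply]

/-- The shift as an algebra equivalence. -/
noncomputable def shE (c : K) : K[X] ≃ₐ[K] K[X] :=
  AlgEquiv.ofAlgHom (sh c) (sh (-c))
    (AlgHom.ext fun p => by simp [AlgHom.comp_apply, sh_sh, sh_zero])
    (AlgHom.ext fun p => by simp [AlgHom.comp_apply, sh_sh, sh_zero])

lemma shE_apply (c : K) (p : K[X]) : shE c p = sh c p := rfl

lemma sh_irreducible {p : K[X]} (c : K) (h : Irreducible p) : Irreducible (sh c p) :=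
  h.map (shE c)

lemma sh_ne_zero {p : K[X]} (c : K) (h : p ≠ 0) : sh c p ≠ 0 := by
  rw [← shE_apply]
  simpa using (map_ne_zero_iff _ (shE c).injective).mpr h

lemma sh_map {F : Type*} [Field F] [Algebra F K] (c : F) (w : F[X]) :
    sh (algebraMap F K c) (w.map (algebraMap F K)) = (sh c w).map (algebraMap F K) := by
  simp only [sh_apply, map_comp, Polynomial.map_add, map_X, map_C]

/-- In a multivariate polynomial ring over a domain, a factor of a nonzero constant is
a constant. -/
lemma mv_eq_C_of_mul_eq_C : ∀ (n : ℕ) (A : Type*) [CommRing A] [IsDomain A]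
    (u h : MvPolynomial (Fin n) A) (c : A), c ≠ 0 → u * h = MvPolynomial.C c →
    ∃ d : A, u = MvPolynomial.C d := by
  intro n
  induction n with
  | zero =>
    intro A _ _ u h c hc he
    exact ⟨_, (MvPolynomial.eq_C_of_isEmpty u)⟩
  | succ n ih =>
    intro A _ _ u h c hc he
    set e := MvPolynomial.finSuccEquiv A n with he'def
    have he' := congrArg e he
    rw [map_mul] at he'
    have hC : e (MvPolynomial.C c) = Polynomial.C (MvPolynomial.C c) := by
      simp [he'def, MvPolynomial.finSuccEquiv_apply]
    rw [hC] at he'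
    have hC0 : (MvPolynomial.C c : MvPolynomial (Fin n) A) ≠ 0 := by simpa using hc
    have hu0 : e u ≠ 0 := by
      intro h0; rw [h0, zero_mul] at he'
      exact hC0 (by simpa using congrArg (fun q => Polynomial.coeff q 0) he'.symm)
    have hh0 : e h ≠ 0 := by
      intro h0; rw [h0, mul_zero] at he'
      exact hC0 (by simpa using congrArg (fun q => Polynomial.coeff q 0) he'.symm)
    have hdeg : (e u).natDegree = 0 := by
      have := Polynomial.natDegree_mul hu0 hh0
      rw [he', Polynomial.natDegree_C] at this
      omega
    obtain ⟨u₀, hu₀⟩ : ∃ u₀, e u = Polynomial.C u₀ :=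
      ⟨_, Polynomial.eq_C_of_natDegree_eq_zero hdeg⟩
    have hcoeff := congrArg (fun q => Polynomial.coeff q 0) he'
    rw [hu₀] at hcoeff
    simp only [Polynomial.coeff_C_mul, Polynomial.coeff_C_zero] at hcoeff
    obtain ⟨d, hd⟩ := ih A u₀ ((e h).coeff 0) c hc hcoeff
    refine ⟨d, ?_⟩
    have : u = e.symm (Polynomial.C (MvPolynomial.C d)) := by
      apply e.injective
      rw [AlgEquiv.apply_symm_apply, hu₀, hd]
    rw [this]
    have h2 := congrArg (fun f : A →+* MvPolynomial (Fin (n + 1)) A => f d)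
      (MvPolynomial.finSuccEquiv_comp_C_eq_C (R := A) n)
    simpa [he'def] using h2

/-- No common irreducible factor over the fraction field for relatively prime
polynomials over a UFD. -/
lemma no_common_prime {R K : Type*} [CommRing R] [IsDomain R] [UniqueFactorizationMonoid R]
    [Field K] [Algebra R K] [IsFractionRing R K] {a b : R[X]} (hab : IsRelPrime a b)
    (π : K[X]) (hπ : Irreducible π)
    (ha : π ∣ a.map (algebraMap R K)) (hb : π ∣ b.map (algebraMap R K)) : False := by
  classical
  letI : NormalizationMonoid R := UniqueFactorizationMonoid.normalizationMonoid.toNormalizationMonoid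
  letI : NormalizedGCDMonoid R := UniqueFactorizationMonoid.toNormalizedGCDMonoid R
  have hinj : Function.Injective (algebraMap R K) := IsFractionRing.injective R K
  set N := IsLocalization.integerNormalization R⁰ π with hNdef
  obtain ⟨s, hs⟩ := IsLocalization.integerNormalization_map_to_map R⁰ π
  rw [← hNdef] at hs
  have hπ0 : π ≠ 0 := hπ.ne_zero
  have hs0 : algebraMap R K (s : R) ≠ 0 := by
    simpa using fun h => nonZeroDivisors.ne_zero s.2 (hinj (by simpa using h))
  have hsmul : N.map (algebraMap R K) = C (algebraMap R K (s : R)) * π := by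
    rw [hs, ← algebraMap_smul K ((s : R)) π, Polynomial.smul_eq_C_mul]
  have hNfact : N.map (algebraMap R K)
      = C (algebraMap R K N.content) * N.primPart.map (algebraMap R K) := by
    conv_lhs => rw [N.eq_C_content_mul_primPart]
    rw [Polynomial.map_mul, map_C]
  have hN0 : N ≠ 0 := by
    intro h0
    rw [h0, Polynomial.map_zero] at hsmul
    exact hπ0 (by
      rcases mul_eq_zero.mp hsmul.symm with h | h
      · exact absurd h (by simpa using hs0)
      · exact h)
  have hcontent0 : algebraMap R K N.content ≠ 0 := fun h =>
    (Polynomial.content_eq_zero_iff.not.mpr hN0) (hinj (by simpa using h))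
  have hπP : π ∣ N.primPart.map (algebraMap R K) := by
    have h1 : π ∣ N.map (algebraMap R K) := by
      rw [hsmul]; exact Dvd.intro_left _ rfl
    rw [hNfact] at h1
    rcases (UniqueFactorizationMonoid.irreducible_iff_prime.mp hπ).2.2 _ _ h1 with h | h
    · exact absurd (isUnit_of_dvd_unit h (isUnit_C.mpr (Ne.isUnit hcontent0))) hπ.not_isUnit
    · exact h
  have hPπ : N.primPart.map (algebraMap R K) ∣ C (algebraMap R K (s : R)) * π := by
    rw [← hsmul, hNfact]
    exact Dvd.intro_left _ rfl
  have key : ∀ c : R[X], π ∣ c.map (algebraMap R K) → N.primPart ∣ c := by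
    intro c hc
    rcases eq_or_ne c 0 with rfl | hc0
    · exact dvd_zero _
    have hcc0 : algebraMap R K c.content ≠ 0 := fun h =>
      (Polynomial.content_eq_zero_iff.not.mpr hc0) (hinj (by simpa using h))
    have hcfact : c.map (algebraMap R K)
        = C (algebraMap R K c.content) * c.primPart.map (algebraMap R K) := by
      conv_lhs => rw [c.eq_C_content_mul_primPart]
      rw [Polynomial.map_mul, map_C]
    have hπPP : π ∣ c.primPart.map (algebraMap R K) := by
      rw [hcfact] at hc
      rcases (UniqueFactorizationMonoid.irreducible_iff_prime.mp hπ).2.2 _ _ hc with h | h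
      · exact absurd (isUnit_of_dvd_unit h (isUnit_C.mpr (Ne.isUnit hcc0))) hπ.not_isUnit
      · exact h
    have hPP : N.primPart.map (algebraMap R K) ∣ c.primPart.map (algebraMap R K) := by
      have h2 : N.primPart.map (algebraMap R K) ∣
          C (algebraMap R K (s : R)) * c.primPart.map (algebraMap R K) :=
        hPπ.trans (mul_dvd_mul_left _ hπPP)
      exact (isUnit_C.mpr (Ne.isUnit hs0)).dvd_mul_left.mp h2
    exact ((N.isPrimitive_primPart).dvd_of_fraction_map_dvd_fraction_map
      hPP).trans c.primPart_dvd
  have hunit : IsUnit N.primPart := hab (key a ha) (key b hb)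
  have : IsUnit (N.primPart.map (algebraMap R K)) :=
    hunit.map (mapRingHom (algebraMap R K))
  exact hπ.not_isUnit (isUnit_of_dvd_unit hπP this)

/-- If a rational-recurrence-type polynomial identity holds and `A, B` have no common
irreducible factor, then every irreducible factor of `B` divides the image of a nonzero
polynomial over the small field `F`. -/
theorem main_no_bad_factor {F : Type*} [Field F] [Algebra F K] [CharZero K]
    (A B : K[X]) (hB : B ≠ 0)
    (hcop : ∀ π : K[X], Irreducible π → π ∣ A → π ∣ B → False)
    (ρ : ℕ) (u v : ℕ → F[X]) (hu : u ρ ≠ 0) (hv : ∀ i, v i ≠ 0)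
    (hid : ∑ i ∈ Finset.range (ρ + 1),
        (u i).map (algebraMap F K) * sh (i : K) A *
        ∏ j ∈ (Finset.range (ρ + 1)).erase i,
          ((v j).map (algebraMap F K) * sh (j : K) B) = 0)
    (p : K[X]) (hp : Irreducible p) (hpB : p ∣ B) :
    ∃ w : F[X], w ≠ 0 ∧ p ∣ w.map (algebraMap F K) := by
  by_contra hbad
  push_neg at hbad
  have hbad' : ∀ (c : ℤ) (w : F[X]), w ≠ 0 → ¬ sh (c : K) p ∣ w.map (algebraMap F K) := by
    intro c w hw hdvd
    have h2 : sh (-(c : K)) (sh (c : K) p) ∣ sh (-(c : K)) (w.map (algebraMap F K)) :=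
      map_dvd (sh (-(c : K))).toRingHom hdvd
    rw [sh_sh, add_neg_cancel, sh_zero] at h2
    have hc : (-(c : K)) = algebraMap F K ((-c : ℤ) : F) := by push_cast; simp
    rw [hc, sh_map] at h2
    exact hbad (sh ((-c : ℤ) : F) w) (sh_ne_zero _ hw) h2
  set S : Set ℤ := {c : ℤ | sh ((c : ℤ) : K) p ∣ B} with hS
  have h0S : (0 : ℤ) ∈ S := by simpa [hS, sh_zero] using hpB
  haveI : CharZero (AlgebraicClosure K) :=
    charZero_of_injective_algebraMap (algebraMap K (AlgebraicClosure K)).injective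
  obtain ⟨α, hα⟩ := IsAlgClosed.exists_aeval_eq_zero (AlgebraicClosure K) p
    (degree_pos_of_irreducible hp).ne'
  have hSsub : S ⊆ (fun c : ℤ => α - (c : AlgebraicClosure K)) ⁻¹'
      { x | IsRoot (B.map (algebraMap K (AlgebraicClosure K))) x } := by
    intro c hc
    simp only [Set.mem_preimage, Set.mem_setOf_eq]
    have hroot : (aeval (α - (c : AlgebraicClosure K))) (sh ((c : ℤ) : K) p) = 0 := by
      rw [sh_apply, aeval_comp]
      have : (aeval (α - (c : AlgebraicClosure K))) (X + C ((c : ℤ) : K)) = α := by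
        simp [map_intCast]
      rw [this, hα]
    obtain ⟨g, hg⟩ := hc
    have := congrArg (aeval (α - (c : AlgebraicClosure K))) hg
    rw [map_mul, hroot, zero_mul] at this
    simpa [IsRoot, eval_map, ← aeval_def] using this
  have hinj : Function.Injective (fun c : ℤ => α - (c : AlgebraicClosure K)) := by
    intro c d h
    simp only [sub_right_injective.eq_iff, Int.cast_injective.eq_iff] at h
    exact h
  have hfin : S.Finite :=
    (Set.Finite.preimage hinj.injOn
      (Polynomial.finite_setOf_isRoot
        ((Polynomial.map_ne_zero_iff
          (algebraMap K (AlgebraicClosure K)).injective).mpr hB))).subset hSsub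
  obtain ⟨cm, hcmS, hcmax⟩ : ∃ cm ∈ S, ∀ c ∈ S, c ≤ cm := by
    obtain ⟨cm, hcmS, h⟩ := Set.Finite.exists_maximalFor id S hfin ⟨0, h0S⟩
    exact ⟨cm, hcmS, fun c hc => not_lt.mp fun hlt => absurd (h hc hlt.le) (not_le.mpr hlt)⟩
  have hz : ∀ (c : ℤ) (n : ℕ) (q : K[X]), sh ((n : ℕ) : K) (sh ((c : ℤ) : K) q)
      = sh (((c + n : ℤ)) : K) q := by
    intro c n q; rw [sh_sh]; push_cast; ring_nf
  have hzneg : ∀ (d : ℤ) (n : ℕ) (q : K[X]), sh (-((n : ℕ) : K)) (sh ((d : ℤ) : K) q)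
      = sh (((d - n : ℤ)) : K) q := by
    intro d n q; rw [sh_sh]; push_cast; ring_nf
  have hcancel : ∀ (n : ℕ) (q : K[X]), sh (-((n : ℕ) : K)) (sh ((n : ℕ) : K) q) = q := by
    intro n q; rw [sh_sh, add_neg_cancel, sh_zero]
  have hrev : ∀ (d : ℤ) (j : ℕ), sh ((d : ℤ) : K) p ∣ sh ((j : ℕ) : K) B → (d - j : ℤ) ∈ S := by
    intro d j hdvd
    have := map_dvd (sh (-((j : ℕ) : K))) hdvd
    rwa [hzneg, hcancel] at this
  have hπirr : Irreducible (sh (((cm + ρ : ℤ)) : K) p) := sh_irreducible _ hp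
  have hπ : Prime (sh (((cm + ρ : ℤ)) : K) p) :=
    (UniqueFactorizationMonoid.irreducible_iff_prime).mp hπirr
  have hπshB : sh (((cm + ρ : ℤ)) : K) p ∣ sh ((ρ : ℕ) : K) B := by
    have := map_dvd (sh ((ρ : ℕ) : K)) hcmS
    rwa [hz] at this
  rw [Finset.sum_range_succ] at hid
  have hTρ : (u ρ).map (algebraMap F K) * sh (ρ : K) A *
      ∏ j ∈ (Finset.range (ρ + 1)).erase ρ, ((v j).map (algebraMap F K) * sh (j : K) B)
      = -∑ i ∈ Finset.range ρ, ((u i).map (algebraMap F K) * sh (i : K) A *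
        ∏ j ∈ (Finset.range (ρ + 1)).erase i, ((v j).map (algebraMap F K) * sh (j : K) B)) :=
    eq_neg_of_add_eq_zero_right (by linear_combination hid)
  have hdvdTρ : sh (((cm + ρ : ℤ)) : K) p ∣
      (u ρ).map (algebraMap F K) * sh (ρ : K) A *
      ∏ j ∈ (Finset.range (ρ + 1)).erase ρ, ((v j).map (algebraMap F K) * sh (j : K) B) := by
    rw [hTρ, dvd_neg]
    apply Finset.dvd_sum
    intro i hi
    have hρmem : ρ ∈ (Finset.range (ρ + 1)).erase i := by
      simp only [Finset.mem_erase, Finset.mem_range] at hi ⊢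
      omega
    exact dvd_mul_of_dvd_right
      ((hπshB.mul_left ((v ρ).map (algebraMap F K))).trans
        (Finset.dvd_prod_of_mem
          (fun j => (v j).map (algebraMap F K) * sh ((j : ℕ) : K) B) hρmem)) _
  rcases hπ.2.2 _ _ hdvdTρ with h | h
  · rcases hπ.2.2 _ _ h with h' | h'
    · exact hbad' (cm + ρ) (u ρ) hu h'
    · have := map_dvd (sh (-((ρ : ℕ) : K))) h'
      rw [hzneg, hcancel] at this
      have hsub : (cm + ↑ρ - ↑ρ : ℤ) = cm := by ring
      rw [hsub] at this
      exact hcop (sh ((cm : ℤ) : K) p) (sh_irreducible _ hp) this hcmS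
  · obtain ⟨j, hj, hdvd⟩ := hπ.exists_mem_finset_dvd h
    rcases hπ.2.2 _ _ hdvd with h' | h'
    · exact hbad' (cm + ρ) (v j) (hv j) h'
    · have hmem : (cm + ρ - j : ℤ) ∈ S := hrev _ _ h'
      have hle := hcmax _ hmem
      have hjρ : j < ρ := by
        simp only [Finset.mem_erase, Finset.mem_range] at hj
        omega
      omega

end StSplit

namespace StSplit2

open StSplit

variable {F : Type*} [Field F] {m : ℕ}

/-- The swap `F[x][t] ≃ F[t][x]`. -/
noncomputable def eSwap (F : Type*) [Field F] (m : ℕ) :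
    Polynomial (MvPolynomial (Fin m) F) ≃ₐ[F] MvPolynomial (Fin m) (Polynomial F) :=
  (MvPolynomial.optionEquivLeft F (Fin m)).symm.trans (MvPolynomial.optionEquivRight F (Fin m))

lemma eSwap_map (W : Polynomial F) :
    eSwap F m (W.map (algebraMap F (MvPolynomial (Fin m) F))) = MvPolynomial.C W := by
  have key : ((eSwap F m : Polynomial (MvPolynomial (Fin m) F) →+*
        MvPolynomial (Fin m) (Polynomial F)).comp
        (mapRingHom (algebraMap F (MvPolynomial (Fin m) F))))
      = (MvPolynomial.C : Polynomial F →+* MvPolynomial (Fin m) (Polynomial F)) := by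
    apply Polynomial.ringHom_ext
    · intro a
      simp only [RingHom.comp_apply, coe_mapRingHom, map_C]
      have h1 : (algebraMap F (MvPolynomial (Fin m) F)) a = MvPolynomial.C a := rfl
      rw [h1]
      have h2 : (MvPolynomial.optionEquivLeft F (Fin m)).symm
          (Polynomial.C (MvPolynomial.C a)) = MvPolynomial.C a := by
        apply (MvPolynomial.optionEquivLeft F (Fin m)).injective
        rw [AlgEquiv.apply_symm_apply, MvPolynomial.optionEquivLeft_C]
      show (MvPolynomial.optionEquivRight F (Fin m))
          ((MvPolynomial.optionEquivLeft F (Fin m)).symm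
            (Polynomial.C (MvPolynomial.C a))) = _
      rw [h2, MvPolynomial.optionEquivRight_C]
    · simp only [RingHom.comp_apply, coe_mapRingHom, map_X]
      have h2 : (MvPolynomial.optionEquivLeft F (Fin m)).symm Polynomial.X
          = MvPolynomial.X none := by
        apply (MvPolynomial.optionEquivLeft F (Fin m)).injective
        rw [AlgEquiv.apply_symm_apply, MvPolynomial.optionEquivLeft_X_none]
      show (MvPolynomial.optionEquivRight F (Fin m))
          ((MvPolynomial.optionEquivLeft F (Fin m)).symm Polynomial.X) = _
      rw [h2, MvPolynomial.optionEquivRight_X_none]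
  exact congrArg (fun f : Polynomial F →+* MvPolynomial (Fin m) (Polynomial F) => f W) key

/-- A factor (over `F[x][t]`) of a polynomial in `t` alone is a polynomial in `t` alone. -/
lemma splitDvd {u h : Polynomial (MvPolynomial (Fin m) F)} {W : Polynomial F} (hW : W ≠ 0)
    (he : u * h = W.map (algebraMap F (MvPolynomial (Fin m) F))) :
    ∃ q : Polynomial F, u = q.map (algebraMap F (MvPolynomial (Fin m) F)) := by
  have he2 := congrArg (eSwap F m) he
  rw [map_mul, eSwap_map] at he2
  obtain ⟨d, hd⟩ := mv_eq_C_of_mul_eq_C m (Polynomial F) (eSwap F m u) (eSwap F m h) W hW he2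
  refine ⟨d, (eSwap F m).injective ?_⟩
  rw [hd, eSwap_map]

end StSplit2

lemma liftRF_eq {F K : Type*} [Field F] [Field K] [Algebra F K] (r : RatFunc F) :
    liftRF r = algebraMap (Polynomial K) (RatFunc K) (r.num.map (algebraMap F K)) /
      algebraMap (Polynomial K) (RatFunc K) (r.denom.map (algebraMap F K)) := by
  conv_lhs => rw [← RatFunc.num_div_denom r]
  rw [liftRF, RatFunc.coe_mapRingHom_eq_coe_map, RatFunc.map_apply_div]
  simp [Polynomial.coe_mapRingHom]

set_option maxHeartbeats 2000000 in
set_option synthInstance.maxHeartbeats 1000000 in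
/-- If `f = a/b ∈ F(t, x₁, …, x_m)` with `gcd(a, b) = 1` satisfies
`Σ_{i=0}^ρ ℓ_i · σ_t^i(f) = 0` for some coefficients `ℓ_i ∈ F(t)` with `ℓ_ρ ≠ 0`
(where `σ_t^i(f)(t, x) = f(t + i, x)`), then the denominator `b` is split:
`b = q(t) · r(x₁, …, x_m)` with `q ∈ F[t]` and `r ∈ F[x₁, …, x_m]`. -/
theorem St_separable_denom_split {F : Type*} [Field F] [CharZero F] (m : ℕ)
    (a b : Polynomial (MvPolynomial (Fin m) F)) (hb : b ≠ 0) (hab : IsRelPrime a b)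
    (ρ : ℕ) (ℓ : ℕ → RatFunc F) (hρ : ℓ ρ ≠ 0)
    (hL : ∑ i ∈ Finset.range (ρ + 1), liftRF (ℓ i) *
      (polyToRF m (shiftPolyN i a) / polyToRF m (shiftPolyN i b)) = 0) :
    ∃ (q : Polynomial F) (r : MvPolynomial (Fin m) F),
      b = Polynomial.C r * q.map (algebraMap F (MvPolynomial (Fin m) F)) := by
  classical
  letI : NormalizationMonoid (MvPolynomial (Fin m) F) :=
    UniqueFactorizationMonoid.normalizationMonoid.toNormalizationMonoid
  letI : NormalizedGCDMonoid (MvPolynomial (Fin m) F) :=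
    UniqueFactorizationMonoid.toNormalizedGCDMonoid _
  set R := MvPolynomial (Fin m) F with hRdef
  set K := FractionRing R with hKdef
  have hinjRK : Function.Injective (algebraMap R K) := IsFractionRing.injective R K
  have hinjFK : Function.Injective (algebraMap F K) := (algebraMap F K).injective
  set A : Polynomial K := a.map (algebraMap R K) with hA
  set B : Polynomial K := b.map (algebraMap R K) with hB
  have hBne : B ≠ 0 := (Polynomial.map_ne_zero_iff hinjRK).mpr hb
  have hpoly : ∀ (u : Polynomial R) (i : ℕ),
      polyToRF m (shiftPolyN i u) =
        algebraMap (Polynomial K) (RatFunc K)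
          (StSplit.sh ((i : ℕ) : K) (u.map (algebraMap R K))) := by
    intro u i
    rw [polyToRF, StSplit.sh_apply]
    congr 1
    rw [shiftPolyN, Polynomial.map_comp, Polynomial.map_add, Polynomial.map_X,
      Polynomial.map_C, map_natCast]
  set U : ℕ → Polynomial K := fun i => (ℓ i).num.map (algebraMap F K) with hU
  set V : ℕ → Polynomial K := fun i => (ℓ i).denom.map (algebraMap F K) with hV
  have hVne : ∀ i, V i ≠ 0 := fun i =>
    (Polynomial.map_ne_zero_iff hinjFK).mpr (RatFunc.denom_ne_zero _)
  set Zp : Polynomial K :=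
    ∏ j ∈ Finset.range (ρ + 1), (V j * StSplit.sh ((j : ℕ) : K) B) with hZp
  have hidR : ∑ i ∈ Finset.range (ρ + 1),
      U i * StSplit.sh ((i : ℕ) : K) A *
      ∏ j ∈ (Finset.range (ρ + 1)).erase i, (V j * StSplit.sh ((j : ℕ) : K) B) = 0 := by
    apply IsFractionRing.injective (Polynomial K) (RatFunc K)
    rw [map_sum, map_zero]
    have hLZ : ∑ i ∈ Finset.range (ρ + 1), (liftRF (ℓ i) *
        (polyToRF m (shiftPolyN i a) / polyToRF m (shiftPolyN i b)) *
        algebraMap (Polynomial K) (RatFunc K) Zp) = 0 := by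
      rw [← Finset.sum_mul, hL, zero_mul]
    rw [← hLZ]
    apply Finset.sum_congr rfl
    intro i hi
    rw [hpoly a i, hpoly b i, liftRF_eq]
    have hZpe : Zp = (V i * StSplit.sh ((i : ℕ) : K) B) *
        ∏ j ∈ (Finset.range (ρ + 1)).erase i, (V j * StSplit.sh ((j : ℕ) : K) B) :=
      (Finset.mul_prod_erase _ _ hi).symm
    rw [map_mul, map_mul, hZpe]
    have h1 : algebraMap (Polynomial K) (RatFunc K) (V i) ≠ 0 :=
      RatFunc.algebraMap_ne_zero (hVne i)
    have h2 : algebraMap (Polynomial K) (RatFunc K) (StSplit.sh ((i : ℕ) : K) B) ≠ 0 :=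
      RatFunc.algebraMap_ne_zero (StSplit.sh_ne_zero _ hBne)
    simp only [map_mul]
    have h1' : algebraMap (Polynomial (FractionRing (MvPolynomial (Fin m) F))) (RatFunc (FractionRing (MvPolynomial (Fin m) F))) ((ℓ i).denom.map (algebraMap F (FractionRing (MvPolynomial (Fin m) F)))) ≠ 0 := h1
    have h2' : algebraMap (Polynomial K) (RatFunc K) (StSplit.sh ((i:ℕ):K) (b.map (algebraMap R K))) ≠ 0 := h2
    field_simp
    ring
  have hcop : ∀ π : Polynomial K, Irreducible π → π ∣ A → π ∣ B → False :=
    fun π h1 h2 h3 => StSplit.no_common_prime hab π h1 h2 h3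
  have hmain := StSplit.main_no_bad_factor A B hBne hcop ρ
    (fun i => (ℓ i).num) (fun i => (ℓ i).denom)
    (RatFunc.num_ne_zero hρ) (fun i => RatFunc.denom_ne_zero _) hidR
  -- build the global denominator bound W ∈ F[X]
  have hBfac := UniqueFactorizationMonoid.factors_prod (α := Polynomial K) hBne
  set f := UniqueFactorizationMonoid.factors B with hf
  set g : Polynomial K → Polynomial F := fun π =>
    if h : ∃ w : Polynomial F, w ≠ 0 ∧ π ∣ w.map (algebraMap F K) then h.choose else 1 with hg
  have hgne : ∀ π, g π ≠ 0 := by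
    intro π; rw [hg]; dsimp only; split_ifs with h
    · exact h.choose_spec.1
    · exact one_ne_zero
  have hgdvd : ∀ π ∈ f, π ∣ (g π).map (algebraMap F K) := by
    intro π hπ
    have hirr := (UniqueFactorizationMonoid.prime_of_factor π hπ).irreducible
    have hdvdB : π ∣ B := (Multiset.dvd_prod hπ).trans hBfac.dvd
    have hex := hmain π hirr hdvdB
    rw [hg]; dsimp only; rw [dif_pos hex]
    exact hex.choose_spec.2
  set W : Polynomial F := (f.map g).prod with hW
  have hWne : W ≠ 0 := by
    rw [hW]
    apply Multiset.prod_ne_zero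
    intro h0
    obtain ⟨π, hπ, h0'⟩ := Multiset.mem_map.mp h0
    exact hgne π h0'
  have hBdvd : B ∣ W.map (algebraMap F K) := by
    have hstep : f.prod ∣ (f.map fun π => (g π).map (algebraMap F K)).prod := by
      have := Multiset.prod_dvd_prod_of_dvd (S := f) id
        (fun π => (g π).map (algebraMap F K)) hgdvd
      simpa using this
    have heq : (f.map fun π => (g π).map (algebraMap F K)).prod
        = W.map (algebraMap F K) := by
      have h3 := map_multiset_prod (mapRingHom (algebraMap F K)) (f.map g)
      simp only [coe_mapRingHom, Multiset.map_map, Function.comp] at h3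
      rw [hW, h3]
    exact hBfac.symm.dvd.trans (hstep.trans heq.dvd)
  set WR : Polynomial R := W.map (algebraMap F R) with hWR
  have hWmap : W.map (algebraMap F K) = WR.map (algebraMap R K) := by
    rw [hWR, Polynomial.map_map, ← IsScalarTower.algebraMap_eq]
  have hWRprim : WR.IsPrimitive := by
    intro r hr
    have hdc : r ∣ WR.coeff W.natDegree := ((Polynomial.C_dvd_iff_dvd_coeff r WR).mp hr) W.natDegree
    rw [hWR, Polynomial.coeff_map] at hdc
    have hlc : W.coeff W.natDegree ≠ 0 := by
      have := Polynomial.leadingCoeff_ne_zero.mpr hWne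
      rwa [Polynomial.leadingCoeff] at this
    exact isUnit_of_dvd_unit hdc ((Ne.isUnit hlc).map (algebraMap F R))
  have hpp : b.primPart ∣ WR := by
    apply (Polynomial.isPrimitive_primPart b).dvd_of_fraction_map_dvd_fraction_map
      (K := K)
    have h1 : b.primPart.map (algebraMap R K) ∣ B := by
      have := map_dvd (mapRingHom (algebraMap R K)) (Polynomial.primPart_dvd b)
      simpa using this
    have h2 : B ∣ WR.map (algebraMap R K) := hWmap ▸ hBdvd
    exact h1.trans h2
  obtain ⟨h, hh⟩ := hpp
  obtain ⟨q, hq⟩ := StSplit2.splitDvd (m := m) hWne (hWR ▸ hh.symm)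
  exact ⟨q, b.content, by
    conv_lhs => rw [b.eq_C_content_mul_primPart]
    rw [hq]⟩
end

section
/- Let F be a field of characteristic zero and f ∈ F(t, x₁, …, x_m). Then f satisfies a nonzero linear ordinary differential equation in t with coefficients in F(t) if and only if f is semi-split, i.e., f is a finite sum of products a_i·b_i with a_i ∈ F(t) and b_i ∈ F(x₁, …, x_m). -/
open Polynomial

/-- The derivative `d/dt` on `K(t)` (with constants `K`), by the quotient rule on the
reduced representation. -/
noncomputable def ratDeriv {K : Type*} [Field K] (f : RatFunc K) : RatFunc K :=
  (algebraMap K[X] (RatFunc K) (derivative f.num) * algebraMap K[X] (RatFunc K) f.denom -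
      algebraMap K[X] (RatFunc K) f.num * algebraMap K[X] (RatFunc K) (derivative f.denom)) /
    algebraMap K[X] (RatFunc K) (f.denom ^ 2)

section Core
variable {K : Type*} [Field K]
local notation "A" => algebraMap K[X] (RatFunc K)
lemma A_ne_zero {p : K[X]} (hp : p ≠ 0) : A p ≠ 0 := RatFunc.algebraMap_ne_zero hp
lemma A_div_eq_A_div {a b c d : K[X]} (hb : b ≠ 0) (hd : d ≠ 0) (h : a * d = c * b) :
    A a / A b = A c / A d := by
  rw [div_eq_div_iff (A_ne_zero hb) (A_ne_zero hd), ← map_mul, ← map_mul, h]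
lemma cross_of_eq {a b c d : K[X]} (hb : b ≠ 0) (hd : d ≠ 0)
    (h : A a / A b = A c / A d) : a * d = c * b := by
  rw [div_eq_div_iff (A_ne_zero hb) (A_ne_zero hd), ← map_mul, ← map_mul] at h
  exact RatFunc.algebraMap_injective K h
lemma ratDeriv_eq (r : RatFunc K) :
    ratDeriv r = A (derivative r.num * r.denom - r.num * derivative r.denom) / A (r.denom ^ 2) := by
  rw [ratDeriv, map_sub, map_mul, map_mul]
lemma ratDeriv_div (p : K[X]) {q : K[X]} (hq : q ≠ 0) :
    ratDeriv (A p / A q) = A (derivative p * q - p * derivative q) / A (q ^ 2) := by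
  set r := A p / A q with hr
  obtain ⟨g, hg⟩ : r.denom ∣ q := RatFunc.denom_div_dvd p q
  have hg0 : g ≠ 0 := by rintro rfl; rw [mul_zero] at hg; exact hq hg
  have hcross : r.num * q = p * r.denom :=
    cross_of_eq (RatFunc.denom_ne_zero r) hq (by rw [RatFunc.num_div_denom])
  have hp : p = r.num * g := by
    have h2 : (r.num * g) * r.denom = p * r.denom := by rw [← hcross, hg]; ring
    exact (mul_right_cancel₀ (RatFunc.denom_ne_zero r) h2).symm
  rw [ratDeriv_eq r]
  apply A_div_eq_A_div (pow_ne_zero _ (RatFunc.denom_ne_zero r)) (pow_ne_zero _ hq)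
  rw [hp, hg]
  simp only [derivative_mul]
  ring

lemma ratDeriv_algebraMap (p : K[X]) : ratDeriv (A p) = A (derivative p) := by
  have h1 : A p = A p / A 1 := by rw [map_one, div_one]
  rw [h1, ratDeriv_div p one_ne_zero]
  simp

lemma ratDeriv_zero : ratDeriv (0 : RatFunc K) = 0 := by
  have := ratDeriv_algebraMap (0 : K[X]); simpa using this

lemma ratDeriv_add_div {p1 p2 q1 q2 : K[X]} (h1 : q1 ≠ 0) (h2 : q2 ≠ 0) :
    ratDeriv (A p1 / A q1 + A p2 / A q2) = ratDeriv (A p1 / A q1) + ratDeriv (A p2 / A q2) := by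
  have hsum : A p1 / A q1 + A p2 / A q2 = A (p1 * q2 + p2 * q1) / A (q1 * q2) := by
    rw [div_add_div _ _ (A_ne_zero h1) (A_ne_zero h2), ← map_mul, ← map_mul, ← map_mul, ← map_add,
      mul_comm q1 p2]
  rw [hsum, ratDeriv_div _ (mul_ne_zero h1 h2), ratDeriv_div _ h1, ratDeriv_div _ h2,
    div_add_div _ _ (A_ne_zero (pow_ne_zero _ h1)) (A_ne_zero (pow_ne_zero _ h2)),
    ← map_mul, ← map_mul, ← map_mul, ← map_add]
  apply A_div_eq_A_div (pow_ne_zero _ (mul_ne_zero h1 h2))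
    (mul_ne_zero (pow_ne_zero _ h1) (pow_ne_zero _ h2))
  simp only [derivative_mul, derivative_add]
  ring

lemma ratDeriv_add (x y : RatFunc K) : ratDeriv (x + y) = ratDeriv x + ratDeriv y := by
  rw [← RatFunc.num_div_denom x, ← RatFunc.num_div_denom y]
  exact ratDeriv_add_div (RatFunc.denom_ne_zero x) (RatFunc.denom_ne_zero y)

lemma ratDeriv_mul_div {p1 p2 q1 q2 : K[X]} (h1 : q1 ≠ 0) (h2 : q2 ≠ 0) :
    ratDeriv (A p1 / A q1 * (A p2 / A q2)) =
      ratDeriv (A p1 / A q1) * (A p2 / A q2) + A p1 / A q1 * ratDeriv (A p2 / A q2) := by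
  have hprod : A p1 / A q1 * (A p2 / A q2) = A (p1 * p2) / A (q1 * q2) := by
    rw [div_mul_div_comm, ← map_mul, ← map_mul]
  rw [hprod, ratDeriv_div _ (mul_ne_zero h1 h2), ratDeriv_div _ h1, ratDeriv_div _ h2,
    div_mul_div_comm, div_mul_div_comm]
  simp only [← map_mul]
  rw [div_add_div _ _ (A_ne_zero (mul_ne_zero (pow_ne_zero _ h1) h2))
      (A_ne_zero (mul_ne_zero h1 (pow_ne_zero _ h2)))]
  simp only [← map_mul, ← map_add]
  apply A_div_eq_A_div (pow_ne_zero _ (mul_ne_zero h1 h2))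
    (mul_ne_zero (mul_ne_zero (pow_ne_zero _ h1) h2) (mul_ne_zero h1 (pow_ne_zero _ h2)))
  simp only [derivative_mul]
  ring

lemma ratDeriv_mul (x y : RatFunc K) : ratDeriv (x * y) = ratDeriv x * y + x * ratDeriv y := by
  rw [← RatFunc.num_div_denom x, ← RatFunc.num_div_denom y]
  exact ratDeriv_mul_div (RatFunc.denom_ne_zero x) (RatFunc.denom_ne_zero y)

end Core

section Lift
variable {F K : Type*} [Field F] [Field K] [Algebra F K]

lemma liftRF_div (p q : F[X]) :
    (liftRF (algebraMap F[X] (RatFunc F) p / algebraMap F[X] (RatFunc F) q) : RatFunc K) =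
      algebraMap K[X] (RatFunc K) (p.map (algebraMap F K)) /
        algebraMap K[X] (RatFunc K) (q.map (algebraMap F K)) := by
  rw [liftRF]
  rw [show (RatFunc.mapRingHom (Polynomial.mapRingHom (algebraMap F K)) _ :
      RatFunc F →+* RatFunc K) (algebraMap F[X] (RatFunc F) p / algebraMap F[X] (RatFunc F) q)
      = RatFunc.map (Polynomial.mapRingHom (algebraMap F K)) _
        (algebraMap F[X] (RatFunc F) p / algebraMap F[X] (RatFunc F) q) from
    congrFun (RatFunc.coe_mapRingHom_eq_coe_map _ _) _, RatFunc.map_apply_div]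
  simp [Polynomial.coe_mapRingHom]

lemma liftRF_algebraMap (p : F[X]) :
    (liftRF (algebraMap F[X] (RatFunc F) p) : RatFunc K) =
      algebraMap K[X] (RatFunc K) (p.map (algebraMap F K)) := by
  have := liftRF_div (K := K) p 1
  simpa using this

lemma liftRF_ratDeriv (x : RatFunc F) :
    (liftRF (ratDeriv x) : RatFunc K) = ratDeriv (liftRF x) := by
  conv_rhs => rw [← RatFunc.num_div_denom x]
  conv_lhs => rw [← RatFunc.num_div_denom x]
  rw [ratDeriv_div _ (RatFunc.denom_ne_zero x), liftRF_div, liftRF_div,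
    ratDeriv_div _ ((Polynomial.map_ne_zero_iff (algebraMap F K).injective).mpr
      (RatFunc.denom_ne_zero x))]
  simp [Polynomial.derivative_map, Polynomial.map_sub, Polynomial.map_mul, Polynomial.map_pow]

lemma liftRF_injective : Function.Injective (liftRF (F := F) (K := K)) :=
  RingHom.injective _

end Lift

section Pole
variable {K : Type*} [Field K] [CharZero K]

local notation "A" => algebraMap K[X] (RatFunc K)

lemma not_dvd_derivative {π : K[X]} (hπ : Prime π) : ¬ π ∣ derivative π := by
  intro h
  by_cases hd : derivative π = 0
  · have hdeg : π.natDegree = 0 := natDegree_eq_zero_of_derivative_eq_zero hd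
    obtain ⟨c, rfl⟩ := Polynomial.natDegree_eq_zero.mp hdeg
    exact hπ.not_unit (Polynomial.isUnit_C.mpr
      (Ne.isUnit (fun hc => hπ.ne_zero (by rw [hc, map_zero]))))
  · have h1 := Polynomial.degree_le_of_dvd h hd
    have h2 := Polynomial.degree_derivative_lt hπ.ne_zero
    exact absurd (h1.trans_lt h2) (lt_irrefl _)

omit [CharZero K] in
lemma not_dvd_num {π : K[X]} (hπ : Prime π) {r : RatFunc K} (h : π ∣ r.denom) :
    ¬ π ∣ r.num := fun hn =>
  hπ.not_unit ((RatFunc.isCoprime_num_denom r).isUnit_of_dvd' hn h)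

lemma pole_step {π : K[X]} (hπ : Prime π) {r : RatFunc K} {k : ℕ} (hk1 : 1 ≤ k)
    (h1 : π ^ k ∣ r.denom) (h2 : ¬ π ^ (k + 1) ∣ r.denom) :
    π ^ (k + 1) ∣ (ratDeriv r).denom ∧ ¬ π ^ (k + 2) ∣ (ratDeriv r).denom := by
  obtain ⟨k', rfl⟩ : ∃ k', k = k' + 1 := ⟨k - 1, (Nat.succ_pred_eq_of_pos hk1).symm⟩
  obtain ⟨u, hu⟩ := h1
  have hu0 : u ≠ 0 := by rintro rfl; exact RatFunc.denom_ne_zero r (by rw [hu, mul_zero])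
  have hπu : ¬ π ∣ u := by
    rintro ⟨w, rfl⟩
    exact h2 ⟨w, by rw [hu]; ring⟩
  have hπn : ¬ π ∣ r.num := not_dvd_num hπ (dvd_pow_self π (Nat.succ_ne_zero k') |>.trans ⟨u, hu⟩)
  have hπ' : ¬ π ∣ derivative π := not_dvd_derivative hπ
  set M : K[X] := π * (u * derivative r.num - r.num * derivative u) -
      C ((k' + 1 : ℕ) : K) * r.num * derivative π * u with hM
  have hq0 : π ^ (k' + 1 + 1) * u ^ 2 ≠ 0 :=
    mul_ne_zero (pow_ne_zero _ hπ.ne_zero) (pow_ne_zero _ hu0)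
  have key : ratDeriv r = A M / A (π ^ (k' + 1 + 1) * u ^ 2) := by
    rw [ratDeriv_eq]
    apply A_div_eq_A_div (pow_ne_zero _ (RatFunc.denom_ne_zero r)) hq0
    rw [hu, hM]
    simp only [derivative_mul, derivative_pow, Nat.add_sub_cancel]
    ring
  have hMd : ¬ π ∣ M := by
    intro hd
    have hd2 : π ∣ C ((k' + 1 : ℕ) : K) * r.num * derivative π * u := by
      have : π ∣ M - π * (u * derivative r.num - r.num * derivative u) :=
        dvd_sub hd (dvd_mul_right π _)
      rw [hM] at this
      simpa using (dvd_neg.mpr (by simpa using this))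
    rcases hπ.dvd_mul.mp hd2 with hd3 | hd3
    · rcases hπ.dvd_mul.mp hd3 with hd4 | hd4
      · rcases hπ.dvd_mul.mp hd4 with hd5 | hd5
        · exact hπ.not_unit (isUnit_of_dvd_unit hd5 (Polynomial.isUnit_C.mpr
            (Ne.isUnit (Nat.cast_ne_zero.mpr (Nat.succ_ne_zero k')))))
        · exact hπn hd5
      · exact hπ' hd4
    · exact hπu hd3
  have hcross : M * (ratDeriv r).denom = (ratDeriv r).num * (π ^ (k' + 1 + 1) * u ^ 2) := by
    apply cross_of_eq hq0 (RatFunc.denom_ne_zero _)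
    rw [← key, RatFunc.num_div_denom]
  have hdd : (ratDeriv r).denom ∣ π ^ (k' + 1 + 1) * u ^ 2 := by
    rw [key]; exact RatFunc.denom_div_dvd _ _
  constructor
  · apply hπ.pow_dvd_of_dvd_mul_left _ hMd
    rw [hcross]
    exact Dvd.dvd.mul_left ⟨u ^ 2, by ring⟩ _
  · intro hbad
    have : π ^ (k' + 1 + 1) * π ∣ π ^ (k' + 1 + 1) * u ^ 2 := by
      refine dvd_trans ?_ hdd
      refine dvd_trans (dvd_of_eq ?_) hbad
      ring
    exact hπu (hπ.dvd_of_dvd_pow ((mul_dvd_mul_iff_left (pow_ne_zero _ hπ.ne_zero)).mp this))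

lemma pole_iterate {π : K[X]} (hπ : Prime π) {f : RatFunc K} {k : ℕ} (hk1 : 1 ≤ k)
    (h1 : π ^ k ∣ f.denom) (h2 : ¬ π ^ (k + 1) ∣ f.denom) (j : ℕ) :
    π ^ (k + j) ∣ (ratDeriv^[j] f).denom ∧ ¬ π ^ (k + j + 1) ∣ (ratDeriv^[j] f).denom := by
  induction j with
  | zero => exact ⟨h1, h2⟩
  | succ n ih =>
    rw [Function.iterate_succ_apply']
    have := pole_step hπ (hk1.trans (Nat.le_add_right k n)) ih.1 ih.2
    constructor
    · exact (by rw [show k + (n+1) = k + n + 1 by ring]; exact this.1)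
    · rw [show k + (n+1) + 1 = k + n + 2 by ring]; exact this.2

end Pole

section PoleLe
variable {K : Type*} [Field K]

local notation "A" => algebraMap K[X] (RatFunc K)

/-- `r` has a pole of order at most `n` at `π` (and no constraint elsewhere). -/
def PoleLe (π : K[X]) (r : RatFunc K) (n : ℕ) : Prop :=
  ∃ a b : K[X], b ≠ 0 ∧ ¬ π ∣ b ∧ r = A a / A (π ^ n * b)

lemma prime_pow_mul_ne_zero {π b : K[X]} (hπ : Prime π) (hb : b ≠ 0) (n : ℕ) :
    π ^ n * b ≠ 0 := mul_ne_zero (pow_ne_zero _ hπ.ne_zero) hb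

lemma poleLe_zero {π : K[X]} (hπ : Prime π) (n : ℕ) : PoleLe π 0 n :=
  ⟨0, 1, one_ne_zero, fun h => hπ.not_unit (isUnit_of_dvd_one h), by rw [map_zero, zero_div]⟩

lemma poleLe_add {π : K[X]} (hπ : Prime π) {r s : RatFunc K} {n : ℕ}
    (hr : PoleLe π r n) (hs : PoleLe π s n) : PoleLe π (r + s) n := by
  obtain ⟨a, b, hb, hπb, rfl⟩ := hr
  obtain ⟨c, d, hd, hπd, rfl⟩ := hs
  refine ⟨a * d + c * b, b * d, mul_ne_zero hb hd,
    fun h => ((hπ.dvd_mul.mp h).elim hπb hπd), ?_⟩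
  rw [div_add_div _ _ (A_ne_zero (prime_pow_mul_ne_zero hπ hb n))
    (A_ne_zero (prime_pow_mul_ne_zero hπ hd n)), ← map_mul, ← map_mul, ← map_mul, ← map_add]
  apply A_div_eq_A_div (mul_ne_zero (prime_pow_mul_ne_zero hπ hb n)
    (prime_pow_mul_ne_zero hπ hd n)) (prime_pow_mul_ne_zero hπ (mul_ne_zero hb hd) n)
  ring

lemma poleLe_neg {π : K[X]} {r : RatFunc K} {n : ℕ} (hr : PoleLe π r n) :
    PoleLe π (-r) n := by
  obtain ⟨a, b, hb, hπb, rfl⟩ := hr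
  exact ⟨-a, b, hb, hπb, by rw [map_neg, neg_div]⟩

lemma poleLe_mono {π : K[X]} (hπ : Prime π) {r : RatFunc K} {n m : ℕ} (hnm : n ≤ m)
    (hr : PoleLe π r n) : PoleLe π r m := by
  obtain ⟨a, b, hb, hπb, rfl⟩ := hr
  obtain ⟨t, rfl⟩ : ∃ t, m = n + t := ⟨m - n, (Nat.add_sub_cancel' hnm).symm⟩
  refine ⟨π ^ t * a, b, hb, hπb, ?_⟩
  apply A_div_eq_A_div (prime_pow_mul_ne_zero hπ hb n) (prime_pow_mul_ne_zero hπ hb (n + t))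
  rw [pow_add]; ring

lemma poleLe_mul_A {π : K[X]} {r : RatFunc K} {n : ℕ} (c : K[X]) (hr : PoleLe π r n) :
    PoleLe π (A c * r) n := by
  obtain ⟨a, b, hb, hπb, rfl⟩ := hr
  exact ⟨c * a, b, hb, hπb, by rw [mul_div_assoc', ← map_mul]⟩

lemma poleLe_sum {π : K[X]} (hπ : Prime π) {n : ℕ} {ι : Type*} (t : Finset ι)
    (g : ι → RatFunc K) (hg : ∀ i ∈ t, PoleLe π (g i) n) : PoleLe π (∑ i ∈ t, g i) n := by
  classical
  induction t using Finset.induction with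
  | empty => simpa using poleLe_zero hπ n
  | @insert x s hx ih =>
    rw [Finset.sum_insert hx]
    exact poleLe_add hπ (hg _ (Finset.mem_insert_self _ _))
      (ih fun i hi => hg i (Finset.mem_insert_of_mem hi))

lemma not_poleLe {π : K[X]} (hπ : Prime π) {r : RatFunc K} {N n : ℕ} (hn : n < N)
    (hd : π ^ N ∣ r.denom) {c : K[X]} (hc : ¬ π ∣ c) : ¬ PoleLe π (A c * r) n := by
  rintro ⟨a, b, hb, hπb, heq⟩
  have hN0 : N ≠ 0 := by omega
  have hπden : π ∣ r.denom := (dvd_pow_self π hN0).trans hd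
  have hπn : ¬ π ∣ r.num := not_dvd_num hπ hπden
  have h2 : A (c * r.num) / A r.denom = A a / A (π ^ n * b) := by
    rw [map_mul, mul_div_assoc, RatFunc.num_div_denom]
    exact heq
  have hcr := cross_of_eq (RatFunc.denom_ne_zero r) (prime_pow_mul_ne_zero hπ hb n) h2
  obtain ⟨s, hs⟩ := hd
  obtain ⟨t, ht⟩ : ∃ t, N = n + (t + 1) := ⟨N - n - 1, by omega⟩
  have hcancel : (c * r.num * b) * π ^ n = (a * (π ^ (t + 1) * s)) * π ^ n := by
    have : c * r.num * (π ^ n * b) = a * (π ^ N * s) := by rw [hcr, hs]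
    rw [ht, pow_add] at this
    linear_combination this
  have heq2 : c * r.num * b = a * (π ^ (t + 1) * s) :=
    mul_right_cancel₀ (pow_ne_zero n hπ.ne_zero) hcancel
  have hfin : π ∣ c * r.num * b := ⟨π ^ t * (a * s), by rw [heq2]; ring⟩
  rcases hπ.dvd_mul.mp hfin with h3 | h3
  · rcases hπ.dvd_mul.mp h3 with h4 | h4
    · exact hc h4
    · exact hπn h4
  · exact hπb h3

end PoleLe

section Mult
variable {K : Type*} [Field K]

lemma prime_natDegree_pos {π : K[X]} (hπ : Prime π) : 0 < π.natDegree := by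
  rcases Nat.eq_zero_or_pos π.natDegree with h | h
  · obtain ⟨c, rfl⟩ := Polynomial.natDegree_eq_zero.mp h
    exact absurd (Polynomial.isUnit_C.mpr
      (Ne.isUnit (fun hc => hπ.ne_zero (by rw [hc, map_zero])))) hπ.not_unit
  · exact h

lemma exists_exact_pow {π x : K[X]} (hπ : Prime π) (hx : x ≠ 0) (hdvd : π ∣ x) :
    ∃ k, 1 ≤ k ∧ π ^ k ∣ x ∧ ¬ π ^ (k + 1) ∣ x := by
  classical
  have hbound : ∀ k, π ^ k ∣ x → k ≤ x.natDegree := fun k hk => by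
    have h1 := Polynomial.natDegree_le_of_dvd hk hx
    rw [Polynomial.natDegree_pow] at h1
    nlinarith [prime_natDegree_pos hπ]
  have hP1 : π ^ 1 ∣ x := by simpa using hdvd
  have h1B : 1 ≤ x.natDegree := hbound 1 hP1
  refine ⟨Nat.findGreatest (fun k => π ^ k ∣ x) x.natDegree,
    Nat.le_findGreatest (P := fun k => π ^ k ∣ x) h1B hP1,
    Nat.findGreatest_spec (P := fun k => π ^ k ∣ x) h1B hP1, fun hbad => ?_⟩
  have := Nat.le_findGreatest (P := fun k => π ^ k ∣ x) (hbound _ hbad) hbad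
  omega

lemma dvd_pow_of_prime_dvd {α : Type*} [CommMonoidWithZero α]
    [UniqueFactorizationMonoid α] {b : α} (a : α) (ha : a ≠ 0)
    (h : ∀ π, Prime π → π ∣ a → π ∣ b) : ∃ n, a ∣ b ^ n := by
  induction a using UniqueFactorizationMonoid.induction_on_prime with
  | h₁ => exact absurd rfl ha
  | h₂ u hu => exact ⟨0, by simpa using hu.dvd⟩
  | h₃ a p ha0 hp ih =>
    obtain ⟨n, hn⟩ := ih ha0 (fun π hπ hπa => h π hπ (hπa.mul_left p))
    exact ⟨n + 1, by
      rw [pow_succ']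
      exact mul_dvd_mul (h p hp (dvd_mul_right p a)) hn⟩

end Mult

section SemiSplit
variable {F K : Type*} [Field F] [Field K] [Algebra F K]

lemma semiSplit_of_div {f : RatFunc K} (u : K[X]) {g : F[X]} (hg : g ≠ 0)
    (hf : f = algebraMap K[X] (RatFunc K) u /
      algebraMap K[X] (RatFunc K) (g.map (algebraMap F K))) :
    ∃ (n : ℕ) (a : Fin n → RatFunc F) (b : Fin n → K),
      f = ∑ i, liftRF (a i) * algebraMap K (RatFunc K) (b i) := by
  refine ⟨u.natDegree + 1,
    fun i => algebraMap F[X] (RatFunc F) (X ^ (i : ℕ)) / algebraMap F[X] (RatFunc F) g,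
    fun i => u.coeff i, ?_⟩
  have hterm : ∀ i : Fin (u.natDegree + 1),
      liftRF (algebraMap F[X] (RatFunc F) (X ^ (i : ℕ)) / algebraMap F[X] (RatFunc F) g) *
        algebraMap K (RatFunc K) (u.coeff i) =
      algebraMap K[X] (RatFunc K) (Polynomial.C (u.coeff i) * X ^ (i : ℕ)) /
        algebraMap K[X] (RatFunc K) (g.map (algebraMap F K)) := by
    intro i
    rw [liftRF_div, Polynomial.map_pow, Polynomial.map_X, RatFunc.algebraMap_eq_C,
      ← RatFunc.algebraMap_C (u.coeff i),
      div_mul_eq_mul_div, ← map_mul, mul_comm]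
  rw [hf, Finset.sum_congr rfl (fun i _ => hterm i), ← Finset.sum_div, ← map_sum]
  congr 2
  conv_lhs => rw [u.as_sum_range_C_mul_X_pow]
  rw [← Fin.sum_univ_eq_sum_range (fun i => Polynomial.C (u.coeff i) * X ^ i) (u.natDegree + 1)]

end SemiSplit


set_option maxHeartbeats 1000000 in
set_option synthInstance.maxHeartbeats 400000 in
/-- A rational function `f ∈ F(t, x₁, …, x_m) = K(t)` (where `K = F(x₁, …, x_m)`)
satisfies a nonzero linear ordinary differential equation in `t` with coefficients in
`F(t)` if and only if `f` is semi-split, i.e. a finite sum of products `aᵢ · bᵢ` with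
`aᵢ ∈ F(t)` and `bᵢ ∈ F(x₁, …, x_m)`. -/
theorem Dt_separable_iff_semiSplit {F : Type*} [Field F] [CharZero F] (m : ℕ)
    (f : RatFunc (FractionRing (MvPolynomial (Fin m) F))) :
    (∃ (ρ : ℕ) (ℓ : ℕ → RatFunc F), ℓ ρ ≠ 0 ∧
        ∑ j ∈ Finset.range (ρ + 1), liftRF (ℓ j) * ratDeriv^[j] f = 0) ↔
      (∃ (n : ℕ) (a : Fin n → RatFunc F)
          (b : Fin n → FractionRing (MvPolynomial (Fin m) F)),
        f = ∑ i, liftRF (a i) *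
          algebraMap (FractionRing (MvPolynomial (Fin m) F)) _ (b i)) := by
  set K := FractionRing (MvPolynomial (Fin m) F) with hK
  haveI : CharZero K := charZero_of_injective_algebraMap (algebraMap F K).injective
  constructor
  · rintro ⟨ρ, ℓ, hℓρ, hsum⟩
    set D : F[X] := ∏ j ∈ Finset.range (ρ + 1), (ℓ j).denom with hD
    have hD0 : D ≠ 0 := Finset.prod_ne_zero_iff.mpr fun j _ => RatFunc.denom_ne_zero _
    set c : ℕ → F[X] := fun j =>
      (ℓ j).num * ∏ i ∈ (Finset.range (ρ + 1)).erase j, (ℓ i).denom with hc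
    have hcj : ∀ j ∈ Finset.range (ρ + 1),
        algebraMap F[X] (RatFunc F) (c j) = ℓ j * algebraMap F[X] (RatFunc F) D := by
      intro j hj
      have hDsplit : D = (ℓ j).denom * ∏ i ∈ (Finset.range (ρ + 1)).erase j, (ℓ i).denom := by
        rw [hD, Finset.mul_prod_erase _ (fun i => (ℓ i).denom) hj]
      have hgen : ∀ x : RatFunc F, x * algebraMap F[X] (RatFunc F) x.denom =
          algebraMap F[X] (RatFunc F) x.num := by
        intro x
        have h := RatFunc.num_div_denom x
        calc x * algebraMap F[X] (RatFunc F) x.denom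
            = (algebraMap F[X] (RatFunc F) x.num / algebraMap F[X] (RatFunc F) x.denom) *
              algebraMap F[X] (RatFunc F) x.denom := by rw [h]
          _ = algebraMap F[X] (RatFunc F) x.num :=
              div_mul_cancel₀ _ (A_ne_zero (RatFunc.denom_ne_zero x))
      simp only [hc]
      rw [map_mul, hDsplit, map_mul, ← mul_assoc, hgen (ℓ j)]
    set Cc : ℕ → K[X] := fun j => (c j).map (algebraMap F K) with hCc
    have hcρ0 : c ρ ≠ 0 := mul_ne_zero (RatFunc.num_ne_zero hℓρ)
      (Finset.prod_ne_zero_iff.mpr fun i _ => RatFunc.denom_ne_zero _)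
    have hCρ0 : Cc ρ ≠ 0 :=
      (Polynomial.map_ne_zero_iff (algebraMap F K).injective).mpr hcρ0
    have h1 : ∀ j ∈ Finset.range (ρ + 1),
        algebraMap K[X] (RatFunc K) (Cc j) * ratDeriv^[j] f =
        (liftRF (ℓ j) * ratDeriv^[j] f) * liftRF (algebraMap F[X] (RatFunc F) D) := by
      intro j hj
      calc algebraMap K[X] (RatFunc K) (Cc j) * ratDeriv^[j] f
          = liftRF (algebraMap F[X] (RatFunc F) (c j)) * ratDeriv^[j] f := by
            rw [liftRF_algebraMap]
        _ = liftRF (ℓ j * algebraMap F[X] (RatFunc F) D) * ratDeriv^[j] f := by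
            rw [hcj j hj]
        _ = (liftRF (ℓ j) * ratDeriv^[j] f) * liftRF (algebraMap F[X] (RatFunc F) D) := by
            rw [map_mul]; ring
    have hKey : ∑ j ∈ Finset.range (ρ + 1),
        algebraMap K[X] (RatFunc K) (Cc j) * ratDeriv^[j] f = 0 := by
      rw [Finset.sum_congr rfl h1, ← Finset.sum_mul, hsum, zero_mul]
    have hprime : ∀ π : K[X], Prime π → π ∣ f.denom → π ∣ Cc ρ := by
      intro π hπ hπd
      by_contra hnd
      obtain ⟨k, hk1, hk, hk1'⟩ := exists_exact_pow hπ (RatFunc.denom_ne_zero f) hπd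
      have hiter := fun j => pole_iterate hπ hk1 hk hk1' j
      have hiso : algebraMap K[X] (RatFunc K) (Cc ρ) * ratDeriv^[ρ] f
          = - ∑ j ∈ Finset.range ρ, algebraMap K[X] (RatFunc K) (Cc j) * ratDeriv^[j] f := by
        rw [Finset.sum_range_succ] at hKey
        exact eq_neg_of_add_eq_zero_right hKey
      have hpole : ∀ j, PoleLe π (ratDeriv^[j] f) (k + j) := by
        intro j
        obtain ⟨u, hu⟩ := (hiter j).1
        have hπu : ¬ π ∣ u := by
          rintro ⟨w, rfl⟩
          exact (hiter j).2 ⟨w, by rw [hu]; ring⟩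
        have hu0 : u ≠ 0 := by
          rintro rfl
          exact RatFunc.denom_ne_zero _ (by rw [hu, mul_zero])
        exact ⟨(ratDeriv^[j] f).num, u, hu0, hπu, by rw [← hu, RatFunc.num_div_denom]⟩
      have hle : PoleLe π (algebraMap K[X] (RatFunc K) (Cc ρ) * ratDeriv^[ρ] f) (k + ρ - 1) := by
        rw [hiso]
        apply poleLe_neg
        apply poleLe_sum hπ
        intro j hj
        have hj' : j < ρ := Finset.mem_range.mp hj
        exact poleLe_mono hπ (by omega) (poleLe_mul_A _ (hpole j))
      exact not_poleLe hπ (show k + ρ - 1 < k + ρ by omega) (hiter ρ).1 hnd hle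
    obtain ⟨n, s, hs⟩ : ∃ n s, (Cc ρ) ^ n = f.denom * s := by
      obtain ⟨n, t, ht⟩ := dvd_pow_of_prime_dvd f.denom (RatFunc.denom_ne_zero f) hprime
      exact ⟨n, t, ht⟩
    have hmapg : ((c ρ) ^ n).map (algebraMap F K) = (Cc ρ) ^ n := by
      simp only [hCc, Polynomial.map_pow]
    apply semiSplit_of_div (f.num * s) (pow_ne_zero n hcρ0)
    rw [hmapg, hs, map_mul, map_mul, ← div_mul_div_comm, RatFunc.num_div_denom]
    by_cases hsz : s = 0
    · exfalso
      rw [hsz, mul_zero] at hs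
      exact pow_ne_zero n hCρ0 hs
    · rw [div_self (A_ne_zero hsz), mul_one]
  · rintro ⟨n, a, b, hf⟩
    letI : Algebra (RatFunc F) (RatFunc K) := (liftRF (F := F) (K := K)).toAlgebra
    have hsm : ∀ (r : RatFunc F) (x : RatFunc K), r • x = liftRF r * x := fun r x => rfl
    set v0 : Fin n → RatFunc K := fun i => algebraMap K (RatFunc K) (b i) with hv0
    set W : Submodule (RatFunc F) (RatFunc K) :=
      Submodule.span (RatFunc F) (Set.range v0) with hW
    haveI : FiniteDimensional (RatFunc F) W :=
      FiniteDimensional.span_of_finite _ (Set.finite_range _)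
    have hconst : ∀ i : Fin n, ratDeriv (v0 i) = 0 := by
      intro i
      simp only [hv0]
      rw [RatFunc.algebraMap_eq_C, ← RatFunc.algebraMap_C, ratDeriv_algebraMap]
      simp
    have hWd : ∀ x, x ∈ W → x ∈ W ∧ ratDeriv x ∈ W := by
      intro x hx
      refine Submodule.span_induction (p := fun x _ => x ∈ W ∧ ratDeriv x ∈ W)
        ?_ ?_ ?_ ?_ hx
      · rintro y ⟨i, rfl⟩
        exact ⟨Submodule.subset_span ⟨i, rfl⟩, by rw [hconst i]; exact W.zero_mem⟩
      · exact ⟨W.zero_mem, by rw [ratDeriv_zero]; exact W.zero_mem⟩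
      · rintro y z hy hz ⟨hy1, hy2⟩ ⟨hz1, hz2⟩
        exact ⟨W.add_mem hy1 hz1, by rw [ratDeriv_add]; exact W.add_mem hy2 hz2⟩
      · rintro r y hy ⟨hy1, hy2⟩
        refine ⟨W.smul_mem r hy1, ?_⟩
        rw [hsm, ratDeriv_mul, ← liftRF_ratDeriv]
        exact W.add_mem (by rw [← hsm]; exact W.smul_mem _ hy1)
          (by rw [← hsm]; exact W.smul_mem _ hy2)
    have hiter : ∀ j, ratDeriv^[j] f ∈ W := by
      intro j
      induction j with
      | zero =>
        simp only [Function.iterate_zero, id_eq]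
        rw [hf]
        refine Submodule.sum_mem _ fun i _ => ?_
        rw [← hsm]
        exact W.smul_mem _ (Submodule.subset_span ⟨i, rfl⟩)
      | succ j ih =>
        rw [Function.iterate_succ_apply']
        exact (hWd _ ih).2
    have hcard : ¬ LinearIndependent (RatFunc F)
        (fun j : Fin (n + 1) => (⟨ratDeriv^[(j : ℕ)] f, hiter j⟩ : W)) := by
      intro hli
      have h1 := hli.fintype_card_le_finrank
      have h2 : Module.finrank (RatFunc F) W ≤ n := by
        rw [hW]
        simpa [Set.finrank] using finrank_range_le_card (R := RatFunc F) v0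
      simp only [Fintype.card_fin] at h1
      omega
    rw [Fintype.not_linearIndependent_iff] at hcard
    obtain ⟨g, hg0, i0, hi0⟩ := hcard
    have hgsum : ∑ j : Fin (n + 1), liftRF (g j) * ratDeriv^[(j : ℕ)] f = 0 := by
      have h3 := congrArg (Subtype.val : W → RatFunc K) hg0
      rw [AddSubmonoidClass.coe_finset_sum] at h3
      simp only [SetLike.val_smul, hsm, ZeroMemClass.coe_zero] at h3
      exact h3
    classical
    set ℓ' : ℕ → RatFunc F := fun j => if h : j < n + 1 then g ⟨j, h⟩ else 0 with hℓ'
    have hSne : (Finset.filter (fun j => ℓ' j ≠ 0) (Finset.range (n + 1))).Nonempty :=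
      ⟨(i0 : ℕ), Finset.mem_filter.mpr ⟨Finset.mem_range.mpr i0.isLt, by
        simp only [hℓ', i0.isLt, dif_pos, Fin.eta]; exact hi0⟩⟩
    set ρ := (Finset.filter (fun j => ℓ' j ≠ 0) (Finset.range (n + 1))).max' hSne with hρ
    have hρmem := Finset.max'_mem _ hSne
    have hρn : ρ < n + 1 := Finset.mem_range.mp (Finset.mem_filter.mp hρmem).1
    have hρne : ℓ' ρ ≠ 0 := (Finset.mem_filter.mp hρmem).2
    refine ⟨ρ, ℓ', hρne, ?_⟩
    have hfull : ∑ j ∈ Finset.range (n + 1), liftRF (ℓ' j) * ratDeriv^[j] f = 0 := by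
      rw [← Fin.sum_univ_eq_sum_range (fun j => liftRF (ℓ' j) * ratDeriv^[j] f) (n + 1),
        ← hgsum]
      apply Finset.sum_congr rfl
      intro j _
      have : ℓ' (j : ℕ) = g j := by simp only [hℓ', j.isLt, dif_pos, Fin.eta]
      rw [this]
    have hsub : Finset.range (ρ + 1) ⊆ Finset.range (n + 1) :=
      Finset.range_subset_range.mpr (by omega)
    have hvan : ∀ j ∈ Finset.range (n + 1), j ∉ Finset.range (ρ + 1) →
        liftRF (ℓ' j) * ratDeriv^[j] f = 0 := by
      intro j hj1 hj2
      have hjρ : ρ < j := by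
        by_contra hle
        exact hj2 (Finset.mem_range.mpr (by omega))
      have hz : ℓ' j = 0 := by
        by_contra hne
        have hjle : j ≤ ρ := by
          rw [hρ]
          exact Finset.le_max' _ j (Finset.mem_filter.mpr ⟨hj1, hne⟩)
        omega
      rw [hz, map_zero, zero_mul]
    rw [Finset.sum_subset hsub hvan]
    exact hfull
end
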